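/- The measure μ_t(ds) = (t/(2√π)) e^{-t²/(4s)} s^{-3/2} ds is a probability measure on (0,∞) for every t > 0. -/

import Mathlib

open MeasureTheory Real

/-- `μ_t(ds) = (t/(2√π)) e^{-t²/(4s)} s^{-3/2} ds` is a probability measure on `(0,∞)`. -/
theorem hitting_time_density_is_probability (t : ℝ) (ht : 0 < t) :
    IsProbabilityMeasure
      ((volume.restrict (Set.Ioi (0:ℝ))).withDensity
        (fun s => ENNReal.ofReal
          (t / (2 * Real.sqrt Real.pi) * Real.exp (-t ^ 2 / (4 * s)) * s ^ (-(3:ℝ) / 2)))) := by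
  have hπ : (0:ℝ) < Real.sqrt Real.pi := Real.sqrt_pos.mpr Real.pi_pos
  set f : ℝ → ℝ := fun s => t / (2 * Real.sqrt Real.pi) * Real.exp (-t ^ 2 / (4 * s)) * s ^ (-(3:ℝ) / 2) with hf
  set g : ℝ → ℝ := fun u => t ^ 2 / (4 * u ^ 2) with hg
  set g' : ℝ → ℝ := fun u => -t ^ 2 / (2 * u ^ 3) with hg'
  -- derivative
  have hderiv : ∀ u ∈ Set.Ioi (0:ℝ), HasDerivWithinAt g (g' u) (Set.Ioi 0) u := by
    intro u hu
    have hu0 : u ≠ 0 := ne_of_gt hu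
    have h1 : HasDerivAt (fun x : ℝ => x ^ 2) (2 * u) u := by
      simpa using hasDerivAt_pow 2 u
    have h2 := (h1.inv (pow_ne_zero 2 hu0)).const_mul (t ^ 2 / 4)
    have heq : g = fun x : ℝ => t ^ 2 / 4 * (x ^ 2)⁻¹ := by
      funext x; simp [hg]; ring
    have e : t ^ 2 / 4 * (-(2 * u) / (u ^ 2) ^ 2) = g' u := by
      simp only [hg']
      rw [mul_div_assoc', div_eq_div_iff (pow_ne_zero 2 (pow_ne_zero 2 hu0))
        (mul_ne_zero two_ne_zero (pow_ne_zero 3 hu0))]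
      ring
    have h3 : HasDerivAt g (g' u) u := by
      rw [heq, ← e]; exact h2
    exact h3.hasDerivWithinAt
  -- injectivity
  have hinj : Set.InjOn g (Set.Ioi 0) := by
    intro a ha b hb hab
    simp only [hg, Set.mem_Ioi] at *
    have ht2 : (0:ℝ) < t ^ 2 := by positivity
    have h2 : a ^ 2 = b ^ 2 := by
      field_simp at hab
      nlinarith
    nlinarith
  -- image
  have himg : g '' Set.Ioi 0 = Set.Ioi 0 := by
    ext s
    constructor
    · rintro ⟨u, hu, rfl⟩
      simp only [Set.mem_Ioi] at hu ⊢
      show (0:ℝ) < t ^ 2 / (4 * u ^ 2)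
      positivity
    · intro hs
      simp only [Set.mem_Ioi] at hs
      refine ⟨t / (2 * Real.sqrt s), Set.mem_Ioi.mpr (by positivity), ?_⟩
      have h1 : Real.sqrt s ^ 2 = s := Real.sq_sqrt hs.le
      have h2 : Real.sqrt s ≠ 0 := by positivity
      simp only [hg]
      field_simp
      nlinarith
  -- rpow identity
  have key : ∀ a : ℝ, 0 < a → (a ^ 2 : ℝ) ^ (-(3:ℝ)/2) = (a ^ 3)⁻¹ := by
    intro a ha
    rw [← Real.rpow_natCast a 2, ← Real.rpow_mul ha.le, ← Real.rpow_natCast a 3,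
      ← Real.rpow_neg ha.le]
    norm_num
  -- pointwise identity on Ioi 0
  have hpt : ∀ u ∈ Set.Ioi (0:ℝ),
      |g' u| • f (g u) = 2 / Real.sqrt Real.pi * Real.exp (-u ^ 2) := by
    intro u hu
    simp only [Set.mem_Ioi] at hu
    have hu0 : u ≠ 0 := ne_of_gt hu
    have habs : |g' u| = t ^ 2 / (2 * u ^ 3) := by
      have : g' u = -(t ^ 2 / (2 * u ^ 3)) := by simp [hg']; ring
      rw [this, abs_neg, abs_of_pos (by positivity)]
    have hexp : -t ^ 2 / (4 * g u) = -u ^ 2 := by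
      simp only [hg]
      field_simp
    have hgu : g u = (t / (2 * u)) ^ 2 := by
      simp only [hg]; field_simp; ring
    have hrpow : (g u) ^ (-(3:ℝ)/2) = ((t / (2 * u)) ^ 3)⁻¹ := by
      rw [hgu]; exact key _ (by positivity)
    simp only [smul_eq_mul, hf, habs, hexp, hrpow]
    field_simp
  -- integrability of f on Ioi 0
  have hgauss : IntegrableOn (fun u : ℝ => 2 / Real.sqrt Real.pi * Real.exp (-u ^ 2))
      (Set.Ioi 0) := by
    have h1 : Integrable (fun u : ℝ => Real.exp (-1 * u ^ 2)) := integrable_exp_neg_mul_sq one_pos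
    have := (h1.integrableOn (s := Set.Ioi 0)).const_mul (2 / Real.sqrt Real.pi)
    simp only [neg_mul, one_mul] at this
    exact this
  have hintf : IntegrableOn f (Set.Ioi 0) := by
    rw [← himg,
      integrableOn_image_iff_integrableOn_abs_deriv_smul measurableSet_Ioi hderiv hinj]
    exact hgauss.congr_fun (fun u hu => (hpt u hu).symm) measurableSet_Ioi
  -- the real integral equals 1
  have hint1 : ∫ s in Set.Ioi (0:ℝ), f s = 1 := by
    rw [← himg, integral_image_eq_integral_abs_deriv_smul measurableSet_Ioi hderiv hinj,
      setIntegral_congr_fun measurableSet_Ioi hpt, integral_const_mul]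
    have hG : ∫ u in Set.Ioi (0:ℝ), Real.exp (-u ^ 2) = Real.sqrt Real.pi / 2 := by
      have := integral_gaussian_Ioi 1
      simpa using this
    rw [hG]
    field_simp
  -- wrap up
  constructor
  rw [withDensity_apply _ MeasurableSet.univ, Measure.restrict_univ]
  have hnn : 0 ≤ᵐ[volume.restrict (Set.Ioi (0:ℝ))] f := by
    filter_upwards [self_mem_ae_restrict (measurableSet_Ioi (a := (0:ℝ)))] with s hs
    simp only [Set.mem_Ioi] at hs
    have : 0 < f s := by
      simp only [hf]
      positivity
    exact this.le
  rw [← ofReal_integral_eq_lintegral_ofReal hintf hnn, hint1, ENNReal.ofReal_one]
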